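/- Let (A,·,∘) be a Novikov-Poisson algebra over a field K of characteristic 0. For each t ∈ K define x ∗_t y := x·y + t (x∘y). Then for every t ∈ K the pair (A, ∗_t) is a Novikov algebra, i.e. for all x,y,z ∈ A: (x∗_t y)∗_t z − (y∗_t x)∗_t z = x∗_t(y∗_t z) − y∗_t(x∗_t z) and (x∗_t y)∗_t z = (x∗_t z)∗_t y. Moreover x∗_t y − y∗_t x = t(x∘y − y∘x) for all x,y ∈ A. -/
import Mathlib


/-- For a Novikov-Poisson algebra (A,·,∘) over a field K of characteristic 0 and
any t ∈ K, the operation x ∗_t y := x·y + t(x∘y) is a Novikov product on A, and its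
commutator is t times the commutator of ∘. -/
theorem stmt_7 (K : Type*) [Field K] [CharZero K] (A : Type*) [NonUnitalCommRing A]
    [Module K A] [SMulCommClass K A A] [IsScalarTower K A A]
    (mulN : A →ₗ[K] A →ₗ[K] A)
    (hls : ∀ x y z : A,
        mulN (mulN x y) z - mulN (mulN y x) z = mulN x (mulN y z) - mulN y (mulN x z))
    (hrc : ∀ x y z : A, mulN (mulN x y) z = mulN (mulN x z) y)
    (hnp1 : ∀ x y z : A, mulN (x * y) z = x * mulN y z)
    (hnp2 : ∀ x y z : A, mulN x y * z - mulN y x * z = mulN x (y * z) - mulN y (x * z))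
    (star : K → A → A → A)
    (hstar : ∀ (t : K) (x y : A), star t x y = x * y + t • mulN x y) :
    ∀ t : K,
      (∀ x y z : A,
          star t (star t x y) z - star t (star t y x) z =
            star t x (star t y z) - star t y (star t x z)) ∧
      (∀ x y z : A, star t (star t x y) z = star t (star t x z) y) ∧
      (∀ x y : A, star t x y - star t y x = t • (mulN x y - mulN y x)) := by
  intro t
  have key : ∀ x y z : A, mulN (x * y) z = y * mulN x z := fun x y z => by
    rw [mul_comm, hnp1]
  refine ⟨fun x y z => ?_, fun x y z => ?_, fun x y => ?_⟩
  · simp only [hstar, map_add, map_smul, LinearMap.add_apply, LinearMap.smul_apply,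
      add_mul, mul_add, smul_mul_assoc, mul_smul_comm, smul_add, smul_smul]
    linear_combination (norm := module) t • hnp2 x y z + (t * t) • hls x y z +
      t • hnp1 x y z - t • hnp1 y x z + mul_assoc x y z - mul_assoc y x z
  · simp only [hstar, map_add, map_smul, LinearMap.add_apply, LinearMap.smul_apply,
      add_mul, mul_add, smul_mul_assoc, mul_smul_comm, smul_add, smul_smul]
    linear_combination (norm := module) mul_right_comm x y z + (t * t) • hrc x y z +
      t • key x y z - t • key x z y + t • mul_comm (mulN x y) z - t • mul_comm (mulN x z) y
  · simp only [hstar, smul_sub, mul_comm x y]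
    abel
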